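/- Let g₁, g₂ ≥ 2 and k₁, k₂ ≥ 1. Then: (1) π₁(Σ_{g₁}) × ℤ^{k₁} is not isomorphic to F_{g₂} × ℤ^{k₂}; (2) π₁(Σ_{g₁}) × ℤ^{k₁} ≅ π₁(Σ_{g₂}) × ℤ^{k₂} if and only if g₁ = g₂ and k₁ = k₂; (3) F_{g₁} × ℤ^{k₁} ≅ F_{g₂} × ℤ^{k₂} if and only if g₁ = g₂ and k₁ = k₂; (4) rk(π₁(Σ_g) × ℤ^k) = 2g + k and rk(F_g × ℤ^k) = g + k for all g, k ≥ 0. -/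

import Mathlib

def fixedSubgroup {G : Type*} [Group G] (φ : G →* G) : Subgroup G where
  carrier := {x | φ x = x}
  one_mem' := by simp
  mul_mem' := by
    intro a b ha hb
    simp only [Set.mem_setOf_eq, map_mul] at *
    rw [ha, hb]
  inv_mem' := by
    intro a ha
    simp only [Set.mem_setOf_eq, map_inv] at *
    rw [ha]

open scoped commutatorElement in
/-- The surface group π₁(Σ_g) = ⟨a₁,b₁,…,a_g,b_g ∣ [a₁,b₁]⋯[a_g,b_g] = 1⟩,
with generators `(i, true) = aᵢ` and `(i, false) = bᵢ`. -/
abbrev SurfaceGroup (g : ℕ) : Type :=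
  PresentedGroup
    ({(List.ofFn fun i : Fin g =>
        ⁅FreeGroup.of (i, true), FreeGroup.of (i, false)⁆).prod} :
      Set (FreeGroup (Fin g × Bool)))

/-- The rank of a group: the minimal cardinality of a generating set. -/
noncomputable def grpRank (G : Type*) [Group G] : Cardinal :=
  ⨅ S : {S : Set G // Subgroup.closure S = ⊤}, Cardinal.mk S.1

open Finset Subgroup
open scoped commutatorElement

section RelWord
variable {G H : Type*} [Group G] [Group H]

/-- the surface relator word evaluated at `v`. -/
def relWord (g : ℕ) (v : Fin g × Bool → G) : G :=
  (List.ofFn fun i => ⁅v (i, true), v (i, false)⁆).prod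

lemma relWord_map (g : ℕ) (φ : G →* H) (v : Fin g × Bool → G) :
    relWord g (fun x => φ (v x)) = φ (relWord g v) := by
  unfold relWord
  rw [map_list_prod, List.map_ofFn]
  congr 1
  exact congrArg List.ofFn (funext fun i => (map_commutatorElement φ _ _).symm)

lemma relWord_eq_one {K : Type*} [CommGroup K] (g : ℕ) (v : Fin g × Bool → K) :
    relWord g v = 1 := by
  unfold relWord
  apply List.prod_eq_one
  intro x hx
  rw [List.mem_ofFn] at hx
  obtain ⟨i, rfl⟩ := hx
  exact commutatorElement_eq_one_iff_commute.2 (Commute.all _ _)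

lemma surface_rel_eq (g : ℕ) :
    (List.ofFn fun i : Fin g =>
        ⁅FreeGroup.of (i, true), FreeGroup.of (i, false)⁆).prod
      = relWord g (fun x => FreeGroup.of x) := rfl

/-- Homs out of the surface group = solutions of the relator equation. -/
def surfaceHomEquiv (g : ℕ) (H : Type*) [Group H] :
    (SurfaceGroup g →* H) ≃ {v : Fin g × Bool → H // relWord g v = 1} where
  toFun φ := ⟨fun x => φ (PresentedGroup.of x), by
    rw [relWord_map]
    have : relWord g (fun x => (PresentedGroup.of x : SurfaceGroup g)) = 1 := by
      have h1 : (fun x : Fin g × Bool => (PresentedGroup.of x : SurfaceGroup g))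
          = fun x => PresentedGroup.mk _ (FreeGroup.of x) := rfl
      rw [h1, relWord_map, ← surface_rel_eq]
      exact (QuotientGroup.eq_one_iff _).2
        (Subgroup.subset_normalClosure (Set.mem_singleton _))
    rw [this, map_one]⟩
  invFun v := PresentedGroup.toGroup (f := v.1) (by
    intro r hr
    rw [Set.mem_singleton_iff] at hr
    subst hr
    rw [surface_rel_eq]
    have := relWord_map g (FreeGroup.lift v.1) (fun x => FreeGroup.of x)
    rw [← this]
    simpa using v.2)
  left_inv φ := by
    apply PresentedGroup.ext
    intro x
    simp [PresentedGroup.toGroup.of]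
  right_inv v := by
    apply Subtype.ext
    funext x
    simp [PresentedGroup.toGroup.of]
end RelWord
section ZHom
open Finset Subgroup Multiplicative
variable {H : Type*} [Group H] {k : ℕ}

lemma noncommProd_eq_single {ι M : Type*} [Fintype ι] [DecidableEq ι] [Monoid M]
    (f : ι → M) (comm) (j : ι) (h : ∀ i, i ≠ j → f i = 1) :
    Finset.univ.noncommProd f comm = f j := by
  rw [← Finset.noncommProd_erase_mul _ (Finset.mem_univ j) _ comm
      (comm.mono (Finset.coe_subset.2 (Finset.erase_subset _ _))),
    Finset.noncommProd_eq_pow_card _ _ _ 1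
      (fun i hi => h i (Finset.ne_of_mem_erase hi)), one_pow, one_mul]

/-- `zHom c hc` : the hom `ℤ^k →* H` sending basis vectors to the commuting family `c`. -/
def zHom (c : Fin k → H) (hc : ∀ i j, Commute (c i) (c j)) :
    Multiplicative (Fin k → ℤ) →* H where
  toFun v := Finset.univ.noncommProd (fun i => c i ^ (toAdd v i))
    (Set.pairwise_of_forall _ _ fun i j => (hc i j).zpow_zpow _ _)
  map_one' := by
    rw [Finset.noncommProd_eq_pow_card _ _ _ 1 (fun i _ => by simp), one_pow]
  map_mul' v w := by
    rw [← Finset.noncommProd_mul_distrib]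
    · apply Finset.noncommProd_congr rfl
      intro i _
      show c i ^ (toAdd (v * w) i) = _
      rw [toAdd_mul, Pi.add_apply, zpow_add]
      rfl
    · intro i _ j _ _; exact (hc i j).zpow_zpow _ _

lemma zHom_single (c : Fin k → H) (hc : ∀ i j, Commute (c i) (c j)) (j : Fin k) :
    zHom c hc (ofAdd (Pi.single j 1)) = c j := by
  simp only [zHom, MonoidHom.coe_mk, OneHom.coe_mk]
  rw [noncommProd_eq_single _ _ j (fun i hij => by simp [Pi.single_apply, hij])]
  simp

lemma hom_eq_zHom (ψ : Multiplicative (Fin k → ℤ) →* H) (v : Multiplicative (Fin k → ℤ)) :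
    ψ v = Finset.univ.noncommProd (fun i => (ψ (ofAdd (Pi.single i 1))) ^ (toAdd v i))
      (id (α := Set.Pairwise _ _) fun i _ j _ _ => ((Commute.all _ _).map ψ).zpow_zpow _ _) := by
  have key : ∀ i : Fin k, ((ofAdd (Pi.single i (1:ℤ)) : Multiplicative (Fin k → ℤ))) ^ (toAdd v i)
      = ofAdd (Pi.single i (toAdd v i)) := by
    intro i
    rw [← ofAdd_zsmul]
    congr 1
    rw [← Pi.single_smul, smul_eq_mul, mul_one]
  have h1 : v = Finset.univ.noncommProd
      (fun i => (ofAdd (Pi.single i (1:ℤ)) : Multiplicative (Fin k → ℤ)) ^ (toAdd v i))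
      (id (α := Set.Pairwise _ _) fun i _ j _ _ => (Commute.all _ _).zpow_zpow _ _) := by
    rw [Finset.noncommProd_eq_prod]
    simp_rw [key]
    rw [← ofAdd_sum, Finset.univ_sum_single]
    rfl
  conv_lhs => rw [h1]
  rw [Finset.map_noncommProd _ _ _ ψ]
  apply Finset.noncommProd_congr rfl
  intro i _
  simp [map_zpow]

/-- characterization: every hom from ℤ^k is `zHom` of its values on basis. -/
def zHomEquiv (H : Type*) [Group H] (k : ℕ) :
    (Multiplicative (Fin k → ℤ) →* H) ≃ {c : Fin k → H // ∀ i j, Commute (c i) (c j)} where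
  toFun ψ := ⟨fun i => ψ (ofAdd (Pi.single i 1)), fun i j => (Commute.all _ _).map ψ⟩
  invFun c := zHom c.1 c.2
  left_inv ψ := by
    refine MonoidHom.ext fun v => ?_
    rw [hom_eq_zHom ψ v]
    rfl
  right_inv c := by
    apply Subtype.ext
    funext j
    exact zHom_single c.1 c.2 j

lemma commute_hom_of_commute_gens (ψ : Multiplicative (Fin k → ℤ) →* H) (x : H)
    (h : ∀ i, Commute x (ψ (ofAdd (Pi.single i 1)))) (v) : Commute x (ψ v) := by
  rw [hom_eq_zHom ψ v]
  apply Finset.noncommProd_commute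
  intro i _
  exact (h i).zpow_right _
end ZHom
section ProdHom
open Subgroup Multiplicative

/-- commuting `k`-tuples in `H`. -/
abbrev commTuples (H : Type*) [Group H] (k : ℕ) : Type _ :=
  {c : Fin k → H // ∀ i j, Commute (c i) (c j)}

variable {A H : Type*} [Group A] [Group H] {k : ℕ}

private lemma sigma_hom_ext {A H : Type*} [Group A] [Group H] {k : ℕ}
    (c c' : commTuples H k) (h : c' = c)
    (θ' : A →* Subgroup.centralizer (Set.range c'.1))
    (θ : A →* Subgroup.centralizer (Set.range c.1))
    (hv : ∀ a, ((θ' a : H)) = ((θ a : H))) :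
    (⟨c', θ'⟩ : Σ c : commTuples H k, (A →* Subgroup.centralizer (Set.range c.1)))
      = ⟨c, θ⟩ := by
  subst h
  congr 1
  ext a
  exact hv a

/-- Homs out of `A × ℤᵏ` into `H`, fibered over commuting `k`-tuples in `H`;
the fiber is homs into the centralizer of the tuple. -/
def prodZHomEquiv (A H : Type*) [Group A] [Group H] (k : ℕ) :
    ((A × Multiplicative (Fin k → ℤ)) →* H) ≃
      Σ c : commTuples H k, (A →* Subgroup.centralizer (Set.range c.1)) where
  toFun φ :=
    ⟨⟨fun i => φ (1, ofAdd (Pi.single i 1)),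
      fun i j => (Commute.all _ _).map (φ.comp (MonoidHom.inr A _))⟩,
     MonoidHom.codRestrict (φ.comp (MonoidHom.inl A _)) _ (by
      intro a
      rw [Subgroup.mem_centralizer_iff]
      rintro g ⟨i, rfl⟩
      show φ _ * φ _ = φ _ * φ _
      rw [← map_mul, ← map_mul]
      congr 1
      exact Prod.ext (by simp) (by simp))⟩
  invFun p := MonoidHom.noncommCoprod ((Subgroup.subtype _).comp p.2) (zHom p.1.1 p.1.2)
    (by
      intro a b
      apply commute_hom_of_commute_gens (zHom p.1.1 p.1.2)
      intro i
      rw [zHom_single]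
      have h1 := (p.2 a).2
      rw [Subgroup.mem_centralizer_iff] at h1
      exact (h1 (p.1.1 i) ⟨i, rfl⟩).symm)
  left_inv φ := by
    ext x
    show φ (x.1, 1) * zHom _ _ x.2 = φ x
    have h2 := (zHomEquiv H k).left_inv (φ.comp (MonoidHom.inr A _))
    have h3 : zHom (fun i => φ (1, ofAdd (Pi.single i 1)))
        (fun i j => (Commute.all _ _).map (φ.comp (MonoidHom.inr A _))) x.2
        = φ (1, x.2) := DFunLike.congr_fun h2 x.2
    rw [h3, ← map_mul]
    congr 1
    exact Prod.ext (by simp) (by simp)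
  right_inv p := by
    obtain ⟨c, θ⟩ := p
    apply sigma_hom_ext
    case h =>
      apply Subtype.ext
      funext i
      show (θ 1 : H) * zHom c.1 c.2 (ofAdd (Pi.single i 1)) = c.1 i
      rw [map_one, zHom_single, OneMemClass.coe_one, one_mul]
    case hv =>
      intro a
      show (θ a : H) * zHom c.1 c.2 1 = (θ a : H)
      rw [map_one, mul_one]
end ProdHom
section SurfCount
open Finset Subgroup Equiv

abbrev P3 : Type := Equiv.Perm (Fin 3)

def r3 : P3 := finRotate 3

/-- number of solutions of the genus-g relator equation `= z` in `S₃`. -/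
noncomputable def nsol (g : ℕ) (z : P3) : ℕ := Nat.card {v : Fin g × Bool → P3 // relWord g v = z}

lemma natCard_sigma {ι : Type*} [Fintype ι] {β : ι → Type*} [∀ i, Fintype (β i)] :
    Nat.card (Σ i, β i) = ∑ i, Nat.card (β i) := by
  simp [Nat.card_eq_fintype_card, Fintype.card_sigma]

lemma relWord_succ {G : Type*} [Group G] (g : ℕ) (v : Fin (g+1) × Bool → G) :
    relWord (g+1) v = ⁅v (0, true), v (0, false)⁆ * relWord g (fun x => v (x.1.succ, x.2)) := by
  unfold relWord
  rw [List.ofFn_succ, List.prod_cons]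

private lemma sigma_sol_ext (g : ℕ) (z : P3) (p p' : P3 × P3) (h : p' = p)
    (w' : {w : Fin g × Bool → P3 // relWord g w = ⁅p'.1, p'.2⁆⁻¹ * z})
    (w : {w : Fin g × Bool → P3 // relWord g w = ⁅p.1, p.2⁆⁻¹ * z}) (hw : w'.1 = w.1) :
    (⟨p', w'⟩ : Σ p : P3 × P3, {w : Fin g × Bool → P3 // relWord g w = ⁅p.1, p.2⁆⁻¹ * z})
      = ⟨p, w⟩ := by
  subst h
  congr 1
  exact Subtype.ext hw

def solSuccEquiv (g : ℕ) (z : P3) :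
    {v : Fin (g+1) × Bool → P3 // relWord (g+1) v = z} ≃
      Σ p : P3 × P3, {w : Fin g × Bool → P3 // relWord g w = ⁅p.1, p.2⁆⁻¹ * z} where
  toFun v := ⟨(v.1 (0, true), v.1 (0, false)), fun x => v.1 (x.1.succ, x.2), by
    have := v.2
    rw [relWord_succ] at this
    rw [eq_inv_mul_iff_mul_eq]
    exact this⟩
  invFun p := ⟨fun x => Fin.cases (motive := fun _ => P3) (bif x.2 then p.1.1 else p.1.2)
      (fun i' => p.2.1 (i', x.2)) x.1, by
    rw [relWord_succ]
    have h1 : (fun x : Fin g × Bool => Fin.cases (motive := fun _ => P3)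
        (bif x.2 then p.1.1 else p.1.2) (fun i' => p.2.1 (i', x.2)) x.1.succ) = p.2.1 := by
      funext x
      simp
    simp only [Fin.cases_zero, h1, p.2.2, Bool.cond_true, Bool.cond_false]
    group⟩
  left_inv v := by
    apply Subtype.ext
    funext x
    obtain ⟨i, s⟩ := x
    induction i using Fin.cases <;> cases s <;> simp
  right_inv p := by
    apply sigma_sol_ext
    case h => simp
    case hw =>
      funext x
      simp

lemma nsol_succ (g : ℕ) (z : P3) :
    nsol (g+1) z = ∑ p : P3 × P3, nsol g (⁅p.1, p.2⁆⁻¹ * z) := by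
  rw [nsol, Nat.card_congr (solSuccEquiv g z), natCard_sigma]
  rfl

lemma nsol_conj (g : ℕ) (σ z : P3) : nsol g (σ * z * σ⁻¹) = nsol g z := by
  apply Nat.card_congr
  exact {
    toFun := fun v => ⟨fun x => σ⁻¹ * v.1 x * σ, by
      have : (fun x => σ⁻¹ * v.1 x * σ) = fun x => (MulAut.conj σ⁻¹).toMonoidHom (v.1 x) := by
        funext x; simp [MulAut.conj]
      rw [this, relWord_map, v.2]
      simp [MulAut.conj]
      group⟩
    invFun := fun w => ⟨fun x => σ * w.1 x * σ⁻¹, by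
      have : (fun x => σ * w.1 x * σ⁻¹) = fun x => (MulAut.conj σ).toMonoidHom (w.1 x) := by
        funext x; simp [MulAut.conj]
      rw [this, relWord_map, w.2]
      simp [MulAut.conj]⟩
    left_inv := fun v => by
      apply Subtype.ext; funext x; group
    right_inv := fun w => by
      apply Subtype.ext; funext x; group }

lemma nsol_sign (g : ℕ) (z : P3) (h : Equiv.Perm.sign z = -1) : nsol g z = 0 := by
  rw [nsol, Nat.card_eq_zero]
  left
  constructor
  rintro ⟨v, hv⟩
  have h1 : Equiv.Perm.sign (relWord g v) = 1 := by
    rw [← relWord_map g Equiv.Perm.sign v]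
    exact relWord_eq_one g _
  rw [hv, h] at h1
  exact absurd h1 (by decide)
end SurfCount
section SurfCount2
open Finset

noncomputable def aa (g : ℕ) : ℕ := nsol g 1
noncomputable def bb (g : ℕ) : ℕ := nsol g r3

lemma nsol_r3_inv (g : ℕ) : nsol g r3⁻¹ = bb g := by
  have h : r3⁻¹ = (Equiv.swap (0:Fin 3) 1) * r3 * (Equiv.swap (0:Fin 3) 1)⁻¹ := by decide
  rw [h, nsol_conj]
  rfl

lemma nsol_classify (g : ℕ) (z : P3) :
    nsol g z = aa g * (if z = 1 then 1 else 0) + bb g * (if z = r3 ∨ z = r3⁻¹ then 1 else 0) := by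
  have tri : ∀ z : P3, z = 1 ∨ z = r3 ∨ z = r3⁻¹ ∨ Equiv.Perm.sign z = -1 := by decide
  rcases tri z with rfl | rfl | rfl | h
  · have h0 : ¬((1:P3) = r3 ∨ (1:P3) = r3⁻¹) := by decide
    rw [if_pos rfl, if_neg h0, mul_one, mul_zero, add_zero]
    rfl
  · have : ¬((r3 : P3) = 1) := by decide
    simp [this, bb]
  · have h1 : ¬((r3⁻¹ : P3) = 1) := by decide
    have h2 : ((r3⁻¹ : P3) = r3 ∨ (r3⁻¹ : P3) = r3⁻¹) := Or.inr rfl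
    simp [h1, h2, nsol_r3_inv]
  · have h1 : ¬(z = 1 ∨ z = r3 ∨ z = r3⁻¹) := by
      revert h
      revert z
      decide
    push_neg at h1
    rw [nsol_sign g z h, if_neg h1.1, if_neg (by push_neg; exact ⟨h1.2.1, h1.2.2⟩)]
    simp

lemma aa_succ (g : ℕ) : aa (g+1) = 18 * aa g + 18 * bb g := by
  show nsol (g+1) 1 = _
  rw [nsol_succ]
  have : ∀ p : P3 × P3, nsol g (⁅p.1, p.2⁆⁻¹ * 1) =
      aa g * (if ⁅p.1, p.2⁆⁻¹ * 1 = 1 then 1 else 0)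
      + bb g * (if ⁅p.1, p.2⁆⁻¹ * 1 = r3 ∨ ⁅p.1, p.2⁆⁻¹ * 1 = r3⁻¹ then 1 else 0) :=
    fun p => nsol_classify g _
  rw [Finset.sum_congr rfl (fun p _ => this p), Finset.sum_add_distrib,
    ← Finset.mul_sum, ← Finset.mul_sum]
  have c1 : (∑ p : P3 × P3, (if ⁅p.1, p.2⁆⁻¹ * 1 = 1 then 1 else 0)) = 18 := by
    set_option maxRecDepth 100000 in decide
  have c2 : (∑ p : P3 × P3, (if ⁅p.1, p.2⁆⁻¹ * 1 = r3 ∨ ⁅p.1, p.2⁆⁻¹ * 1 = r3⁻¹ then 1 else 0)) = 18 := by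
    set_option maxRecDepth 100000 in decide
  rw [c1, c2, mul_comm (aa g) 18, mul_comm (bb g) 18]

lemma bb_succ (g : ℕ) : bb (g+1) = 9 * aa g + 27 * bb g := by
  show nsol (g+1) r3 = _
  rw [nsol_succ]
  have : ∀ p : P3 × P3, nsol g (⁅p.1, p.2⁆⁻¹ * r3) =
      aa g * (if ⁅p.1, p.2⁆⁻¹ * r3 = 1 then 1 else 0)
      + bb g * (if ⁅p.1, p.2⁆⁻¹ * r3 = r3 ∨ ⁅p.1, p.2⁆⁻¹ * r3 = r3⁻¹ then 1 else 0) :=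
    fun p => nsol_classify g _
  rw [Finset.sum_congr rfl (fun p _ => this p), Finset.sum_add_distrib,
    ← Finset.mul_sum, ← Finset.mul_sum]
  have c1 : (∑ p : P3 × P3, (if ⁅p.1, p.2⁆⁻¹ * r3 = 1 then 1 else 0)) = 9 := by
    set_option maxRecDepth 100000 in decide
  have c2 : (∑ p : P3 × P3, (if ⁅p.1, p.2⁆⁻¹ * r3 = r3 ∨ ⁅p.1, p.2⁆⁻¹ * r3 = r3⁻¹ then 1 else 0)) = 27 := by
    set_option maxRecDepth 100000 in decide
  rw [c1, c2, mul_comm (aa g) 9, mul_comm (bb g) 27]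

lemma aa_zero : aa 0 = 1 := by
  rw [aa, nsol, Nat.card_eq_fintype_card]
  decide

lemma bb_zero : bb 0 = 0 := by
  rw [bb, nsol, Nat.card_eq_fintype_card]
  decide

lemma aabb_closed (g : ℕ) : 3 * aa g = 36^g + 2 * 9^g ∧ 3 * bb g + 9^g = 36^g := by
  induction g with
  | zero => simp [aa_zero, bb_zero]
  | succ g ih =>
    obtain ⟨h1, h2⟩ := ih
    rw [aa_succ, bb_succ, pow_succ, pow_succ]
    constructor <;> omega
end SurfCount2
section Centralizers
open Finset Subgroup Equiv

lemma centralizer_triv {k : ℕ} (c : Fin k → P3) (h : ∀ i, c i = 1) :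
    Subgroup.centralizer (Set.range c) = ⊤ := by
  rw [eq_top_iff]
  intro x _
  rw [Subgroup.mem_centralizer_iff]
  rintro g ⟨i, rfl⟩
  rw [h i, one_mul, mul_one]

lemma centralizer_transposition {k : ℕ} (c : Fin k → P3) (t : P3)
    (ht : Equiv.Perm.sign t = -1) (hmem : ∀ i, c i = 1 ∨ c i = t)
    (i0 : Fin k) (hi0 : c i0 = t) :
    Subgroup.centralizer (Set.range c) = Subgroup.zpowers t := by
  apply le_antisymm
  · intro x hx
    rw [Subgroup.mem_centralizer_iff] at hx
    have hcomm : t * x = x * t := hx t ⟨i0, hi0⟩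
    have key : ∀ x t : P3, Equiv.Perm.sign t = -1 → t * x = x * t → x = 1 ∨ x = t := by decide
    rcases key x t ht hcomm with rfl | rfl
    · exact one_mem _
    · exact Subgroup.mem_zpowers x
  · intro x hx
    rw [Subgroup.mem_centralizer_iff]
    rintro g ⟨i, rfl⟩
    obtain ⟨n, rfl⟩ := hx
    rcases hmem i with h | h <;> rw [h]
    · rw [one_mul, mul_one]
    · show t * t ^ n = t ^ n * t
      exact ((Commute.refl t).zpow_right n).eq

lemma centralizer_rot {k : ℕ} (c : Fin k → P3)
    (hmem : ∀ i, c i = 1 ∨ c i = r3 ∨ c i = r3⁻¹) (i0 : Fin k) (hi0 : c i0 ≠ 1) :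
    Subgroup.centralizer (Set.range c) = Subgroup.zpowers r3 := by
  apply le_antisymm
  · intro x hx
    rw [Subgroup.mem_centralizer_iff] at hx
    have h1 : (c i0) * x = x * (c i0) := hx (c i0) ⟨i0, rfl⟩
    have hy : c i0 = r3 ∨ c i0 = r3⁻¹ := (hmem i0).resolve_left hi0
    have key : ∀ x y : P3, (y = r3 ∨ y = r3⁻¹) → y * x = x * y →
        x = 1 ∨ x = r3 ∨ x = r3⁻¹ := by decide
    rcases key x (c i0) hy h1 with rfl | rfl | rfl
    · exact one_mem _
    · exact Subgroup.mem_zpowers r3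
    · exact Subgroup.inv_mem _ (Subgroup.mem_zpowers r3)
  · intro x hx
    rw [Subgroup.mem_centralizer_iff]
    rintro g ⟨i, rfl⟩
    obtain ⟨n, rfl⟩ := hx
    rcases hmem i with h | h | h <;> rw [h]
    · rw [one_mul, mul_one]
    · show r3 * r3 ^ n = r3 ^ n * r3
      exact ((Commute.refl r3).zpow_right n).eq
    · show r3⁻¹ * r3 ^ n = r3 ^ n * r3⁻¹
      exact (((Commute.refl r3).inv_left).zpow_right n).eq
end Centralizers

section HomCongr
variable {A B K L : Type*} [Group A] [Group B] [Group K] [Group L]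

def precompEquiv (e : A ≃* B) : (A →* K) ≃ (B →* K) where
  toFun φ := φ.comp e.symm.toMonoidHom
  invFun φ := φ.comp e.toMonoidHom
  left_inv φ := by ext a; simp
  right_inv φ := by ext b; simp

def postcompEquiv (e : K ≃* L) : (A →* K) ≃ (A →* L) where
  toFun φ := e.toMonoidHom.comp φ
  invFun φ := e.symm.toMonoidHom.comp φ
  left_inv φ := by ext a; simp
  right_inv φ := by ext a; simp
end HomCongr

section HomCounts
-- finiteness
instance finite_surfHom (g : ℕ) (K : Type*) [Group K] [Finite K] :
    Finite (SurfaceGroup g →* K) :=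
  Finite.of_equiv _ (surfaceHomEquiv g K).symm

instance finite_freeHom (g : ℕ) (K : Type*) [Group K] [Finite K] :
    Finite (FreeGroup (Fin g) →* K) :=
  Finite.of_equiv _ (FreeGroup.lift (α := Fin g) (β := K))

lemma card_surfHom_P3 (g : ℕ) : Nat.card (SurfaceGroup g →* P3) = aa g :=
  Nat.card_congr (surfaceHomEquiv g P3)

lemma card_surfHom_comm (g : ℕ) (K : Type*) [CommGroup K] :
    Nat.card (SurfaceGroup g →* K) = Nat.card K ^ (2 * g) := by
  rw [Nat.card_congr (surfaceHomEquiv g K),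
    Nat.card_congr (Equiv.subtypeUnivEquiv (fun v => relWord_eq_one g v)),
    Nat.card_fun, Nat.card_prod]
  congr 1
  simp [Nat.card_eq_fintype_card]
  ring

lemma card_freeHom (g : ℕ) (K : Type*) [Group K] :
    Nat.card (FreeGroup (Fin g) →* K) = Nat.card K ^ g := by
  rw [Nat.card_congr (FreeGroup.lift (α := Fin g) (β := K)).symm, Nat.card_fun]
  congr 1
  exact Nat.card_eq_fintype_card.trans (by simp)

lemma card_zpowers_sign (t : P3) (ht : Equiv.Perm.sign t = -1) :
    Nat.card (Subgroup.zpowers t) = 2 := by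
  rw [Nat.card_zpowers]
  have h2 : t ^ 2 = 1 ∧ t ≠ 1 := by revert t; decide
  exact orderOf_eq_prime h2.1 h2.2

lemma card_zpowers_r3 : Nat.card (Subgroup.zpowers r3) = 3 := by
  rw [Nat.card_zpowers]
  have h2 : r3 ^ 3 = 1 ∧ r3 ≠ 1 := by decide
  exact orderOf_eq_prime h2.1 h2.2
end HomCounts
section TupleCounts
open Finset Subgroup Equiv

instance commTuplesDecidable (k : ℕ) (c : Fin k → P3) :
    Decidable (∀ i j, Commute (c i) (c j)) :=
  decidable_of_iff (∀ i j, c i * c j = c j * c i) Iff.rfl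

instance (k : ℕ) : Fintype (commTuples P3 k) := Subtype.fintype _

-- decide facts about P3
private lemma sign_dichotomy : ∀ x : P3, Equiv.Perm.sign x = 1 ∨ Equiv.Perm.sign x = -1 := by
  decide
private lemma sign_one_mem : ∀ x : P3, Equiv.Perm.sign x = 1 → (x = 1 ∨ x = r3 ∨ x = r3⁻¹) := by
  decide
private lemma sign_neg_ne_one : ∀ x : P3, Equiv.Perm.sign x = -1 → x ≠ 1 := by decide
private lemma commute_with_transposition : ∀ t x : P3, Equiv.Perm.sign t = -1 →
    x * t = t * x → (x = 1 ∨ x = t) := by decide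
private lemma card_transpositions : Fintype.card {t : P3 // Equiv.Perm.sign t = -1} = 3 := by
  decide


private lemma key3 : ∀ x y : P3, (x = 1 ∨ x = r3 ∨ x = r3⁻¹) →
    (y = 1 ∨ y = r3 ∨ y = r3⁻¹) → x * y = y * x := by decide
private lemma key2 : ∀ t x y : P3, Equiv.Perm.sign t = -1 → (x = 1 ∨ x = t) →
    (y = 1 ∨ y = t) → x * y = y * x := by decide
private lemma sign_mem_one : ∀ x : P3, (x = 1 ∨ x = r3 ∨ x = r3⁻¹) →
    Equiv.Perm.sign x = 1 := by decide
private lemma card_Z3 : Fintype.card {x : P3 // x = 1 ∨ x = r3 ∨ x = r3⁻¹} = 3 := by decide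
private lemma card_Z2 : ∀ t : P3, Equiv.Perm.sign t = -1 →
    Fintype.card {x : P3 // x = 1 ∨ x = t} = 2 := by decide
private lemma sign_neg_ne : ∀ x : P3, Equiv.Perm.sign x = -1 → ¬ (Equiv.Perm.sign x = 1) := by
  decide

lemma count_triv (k : ℕ) : Fintype.card {c : commTuples P3 k // ∀ i, c.1 i = 1} = 1 := by
  rw [Fintype.card_eq_one_iff]
  refine ⟨⟨⟨fun _ => 1, fun i j => by simp⟩, fun i => rfl⟩, ?_⟩
  rintro ⟨⟨c, hc⟩, h⟩
  exact Subtype.ext (Subtype.ext (funext fun i => h i))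

private def constOneNe {Z : Type*} [One Z] (k : ℕ) : Fin k → Z := fun _ => 1

lemma card_fun_ne_const {Z : Type*} [Fintype Z] [DecidableEq Z] (k : ℕ) (z0 : Z) :
    Fintype.card {d : Fin k → Z // ¬ ∀ i, d i = z0} = Fintype.card Z ^ k - 1 := by
  classical
  rw [Fintype.card_subtype_compl]
  have h1 : Fintype.card {d : Fin k → Z // ∀ i, d i = z0} = 1 := by
    rw [Fintype.card_eq_one_iff]
    exact ⟨⟨fun _ => z0, fun i => rfl⟩, fun y => Subtype.ext (funext fun i => y.2 i)⟩
  rw [h1, Fintype.card_fun, Fintype.card_fin]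

noncomputable def rotEquiv (k : ℕ) :
    {c : commTuples P3 k // ¬(∀ i, c.1 i = 1) ∧ ∀ i, Equiv.Perm.sign (c.1 i) = 1} ≃
      {d : Fin k → {x : P3 // x = 1 ∨ x = r3 ∨ x = r3⁻¹} //
        ¬ ∀ i, d i = ⟨1, Or.inl rfl⟩} where
  toFun c := ⟨fun i => ⟨c.1.1 i, sign_one_mem _ (c.2.2 i)⟩, by
    intro hall
    exact c.2.1 (fun i => by have := congrArg Subtype.val (hall i); exact this)⟩
  invFun d := ⟨⟨fun i => (d.1 i).1, fun i j => key3 _ _ (d.1 i).2 (d.1 j).2⟩,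
    ⟨fun hall => d.2 (fun i => Subtype.ext (hall i)), fun i => sign_mem_one _ (d.1 i).2⟩⟩
  left_inv c := Subtype.ext (Subtype.ext (funext fun i => rfl))
  right_inv d := Subtype.ext (funext fun i => Subtype.ext rfl)

lemma count_rot (k : ℕ) :
    Fintype.card {c : commTuples P3 k // ¬(∀ i, c.1 i = 1) ∧ ∀ i, Equiv.Perm.sign (c.1 i) = 1}
      = 3 ^ k - 1 := by
  rw [Fintype.card_congr (rotEquiv k), card_fun_ne_const, card_Z3]

private lemma sigma_pair_ext {k : ℕ} (t t' : {t : P3 // Equiv.Perm.sign t = -1}) (h : t' = t)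
    (d' : {d : Fin k → {x : P3 // x = 1 ∨ x = t'.1} // ¬ ∀ i, d i = ⟨1, Or.inl rfl⟩})
    (d : {d : Fin k → {x : P3 // x = 1 ∨ x = t.1} // ¬ ∀ i, d i = ⟨1, Or.inl rfl⟩})
    (hw : ∀ j, (d'.1 j).1 = (d.1 j).1) :
    (⟨t', d'⟩ : Σ t : {t : P3 // Equiv.Perm.sign t = -1},
        {d : Fin k → {x : P3 // x = 1 ∨ x = t.1} // ¬ ∀ i, d i = ⟨1, Or.inl rfl⟩})
      = ⟨t, d⟩ := by
  subst h
  congr 1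
  exact Subtype.ext (funext fun j => Subtype.ext (hw j))

noncomputable def transpEquiv (k : ℕ) :
    (Σ t : {t : P3 // Equiv.Perm.sign t = -1},
        {d : Fin k → {x : P3 // x = 1 ∨ x = t.1} // ¬ ∀ i, d i = ⟨1, Or.inl rfl⟩}) ≃
      {c : commTuples P3 k // ¬ ∀ i, Equiv.Perm.sign (c.1 i) = 1} := by
  classical
  apply Equiv.ofBijective (f := fun p =>
    ⟨⟨fun j => (p.2.1 j).1, fun i j => key2 _ _ _ p.1.2 (p.2.1 i).2 (p.2.1 j).2⟩, by
      intro hall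
      apply p.2.2
      intro j
      apply Subtype.ext
      rcases (p.2.1 j).2 with h | h
      · exact h
      · exfalso
        have h2 : Equiv.Perm.sign ((p.2.1 j).1) = 1 := hall j
        rw [h] at h2
        exact sign_neg_ne _ p.1.2 h2⟩)
  constructor
  · rintro ⟨t, d⟩ ⟨t', d'⟩ heq
    have hval : ∀ j, (d.1 j).1 = (d'.1 j).1 := by
      intro j
      have := congrArg (fun c => c.1.1 j) heq
      exact this
    have hj : ∃ j, (d.1 j).1 ≠ 1 := by
      by_contra hno
      push_neg at hno
      exact d.2 (fun j => Subtype.ext (hno j))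
    obtain ⟨j, hj⟩ := hj
    have ht : t.1 = (d.1 j).1 := ((d.1 j).2.resolve_left hj).symm
    have ht' : t'.1 = (d'.1 j).1 := by
      refine ((d'.1 j).2.resolve_left ?_).symm
      rw [← hval j]
      exact hj
    have htt : t' = t := Subtype.ext (by rw [ht, ht', hval j])
    exact (sigma_pair_ext t t' htt d' d (fun j => (hval j).symm)).symm
  · rintro ⟨⟨c, hcomm⟩, hc⟩
    have hex : ∃ i, Equiv.Perm.sign (c i) = -1 := by
      by_contra hno
      push_neg at hno
      exact hc (fun i => (sign_dichotomy _).resolve_right (hno i))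
    obtain ⟨i0, hi0⟩ := hex
    refine ⟨⟨⟨c i0, hi0⟩, ⟨fun j => ⟨c j, commute_with_transposition _ _ hi0 (hcomm j i0)⟩, ?_⟩⟩, ?_⟩
    · intro hall
      have h1 : c i0 = 1 := congrArg Subtype.val (hall i0)
      rw [h1] at hi0
      exact absurd hi0 (by decide)
    · exact Subtype.ext (Subtype.ext (funext fun j => rfl))

lemma count_transp (k : ℕ) :
    Fintype.card {c : commTuples P3 k // ¬ ∀ i, Equiv.Perm.sign (c.1 i) = 1}
      = 3 * (2 ^ k - 1) := by
  rw [← Fintype.card_congr (transpEquiv k), Fintype.card_sigma]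
  have h : ∀ t : {t : P3 // Equiv.Perm.sign t = -1},
      Fintype.card {d : Fin k → {x : P3 // x = 1 ∨ x = t.1} // ¬ ∀ i, d i = ⟨1, Or.inl rfl⟩}
        = 2 ^ k - 1 := by
    intro t
    rw [card_fun_ne_const, card_Z2 t.1 t.2]
  rw [Finset.sum_congr rfl (fun t _ => h t), Finset.sum_const, smul_eq_mul, Finset.card_univ, card_transpositions]
end TupleCounts
section Partition
open Finset Subgroup Equiv

/-- the number of homs `A × ℤᵏ →* S₃`, in terms of hom counts of `A` -/
lemma master_count (A : Type*) [Group A] [∀ K : Subgroup P3, Finite (A →* K)]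
    (k : ℕ) (n1 n2 n3 : ℕ)
    (h1 : Nat.card (A →* (⊤ : Subgroup P3)) = n1)
    (h2 : ∀ t : P3, Equiv.Perm.sign t = -1 → Nat.card (A →* (Subgroup.zpowers t)) = n2)
    (h3 : Nat.card (A →* (Subgroup.zpowers r3)) = n3) :
    Nat.card ((A × Multiplicative (Fin k → ℤ)) →* P3)
      = n1 + (3 * (2^k - 1)) * n2 + (3^k - 1) * n3 := by
  classical
  rw [Nat.card_congr (prodZHomEquiv A P3 k)]
  have hfin : ∀ c : commTuples P3 k, Fintype (A →* Subgroup.centralizer (Set.range c.1)) :=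
    fun c => Fintype.ofFinite _
  letI := hfin
  rw [natCard_sigma]
  -- pointwise evaluation
  have point : ∀ c : commTuples P3 k,
      Nat.card (A →* Subgroup.centralizer (Set.range c.1))
        = (if ∀ i, c.1 i = 1 then n1 else 0)
          + (if ¬(∀ i, c.1 i = 1) ∧ (∀ i, Equiv.Perm.sign (c.1 i) = 1) then n3 else 0)
          + (if ¬(∀ i, Equiv.Perm.sign (c.1 i) = 1) then n2 else 0) := by
    intro c
    by_cases hA : ∀ i, c.1 i = 1
    · have hs : ∀ i, Equiv.Perm.sign (c.1 i) = 1 := fun i => by rw [hA i]; simp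
      rw [if_pos hA, if_neg (by tauto), if_neg (by tauto), add_zero, add_zero,
        centralizer_triv c.1 hA, h1]
    · by_cases hB : ∀ i, Equiv.Perm.sign (c.1 i) = 1
      · rw [if_neg hA, if_pos ⟨hA, hB⟩, if_neg (by tauto), zero_add, add_zero]
        push_neg at hA
        obtain ⟨i0, hi0⟩ := hA
        rw [centralizer_rot c.1 (fun i => sign_one_mem _ (hB i)) i0 hi0, h3]
      · rw [if_neg hA, if_neg (by tauto), if_pos hB, zero_add, zero_add]
        push_neg at hB
        obtain ⟨i0, hi0⟩ := hB
        have hsgn : Equiv.Perm.sign (c.1 i0) = -1 := (sign_dichotomy _).resolve_left hi0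
        have hmem : ∀ i, c.1 i = 1 ∨ c.1 i = c.1 i0 :=
          fun i => commute_with_transposition _ _ hsgn (c.2 i i0)
        rw [centralizer_transposition c.1 (c.1 i0) hsgn hmem i0 rfl, h2 _ hsgn]
  rw [Finset.sum_congr rfl (fun c _ => point c)]
  rw [Finset.sum_add_distrib, Finset.sum_add_distrib]
  have e1 : (∑ x : commTuples P3 k, if ∀ i, x.1 i = 1 then n1 else 0)
      = Fintype.card {c : commTuples P3 k // ∀ i, c.1 i = 1} * n1 := by
    rw [← Finset.sum_filter, Finset.sum_const, smul_eq_mul, ← Fintype.card_subtype]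
  have e3 : (∑ x : commTuples P3 k,
        if (¬∀ i, x.1 i = 1) ∧ ∀ i, Equiv.Perm.sign (x.1 i) = 1 then n3 else 0)
      = Fintype.card {c : commTuples P3 k //
          (¬∀ i, c.1 i = 1) ∧ ∀ i, Equiv.Perm.sign (c.1 i) = 1} * n3 := by
    rw [← Finset.sum_filter, Finset.sum_const, smul_eq_mul, ← Fintype.card_subtype]
  have e2 : (∑ x : commTuples P3 k, if ¬∀ i, Equiv.Perm.sign (x.1 i) = 1 then n2 else 0)
      = Fintype.card {c : commTuples P3 k // ¬∀ i, Equiv.Perm.sign (c.1 i) = 1} * n2 := by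
    rw [← Finset.sum_filter, Finset.sum_const, smul_eq_mul, ← Fintype.card_subtype]
  rw [e1, e2, e3, count_triv, count_rot, count_transp]
  set u := 2^k - 1 with hu
  set v := 3^k - 1 with hv
  ring
end Partition
section Masters
open Subgroup

lemma card_top_hom_surf (g : ℕ) :
    Nat.card (SurfaceGroup g →* (⊤ : Subgroup P3)) = aa g := by
  rw [Nat.card_congr (postcompEquiv (A := SurfaceGroup g) Subgroup.topEquiv)]
  exact card_surfHom_P3 g

open scoped IsMulCommutative in
lemma HSigma (g k : ℕ) :
    Nat.card ((SurfaceGroup g × Multiplicative (Fin k → ℤ)) →* P3)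
      = aa g + (3 * (2^k - 1)) * 4^g + (3^k - 1) * 9^g := by
  refine master_count (SurfaceGroup g) k (aa g) (4^g) (9^g)
    (card_top_hom_surf g) ?_ ?_
  · intro t ht
    rw [card_surfHom_comm g _, card_zpowers_sign t ht, pow_mul]
    norm_num
  · rw [card_surfHom_comm g _, card_zpowers_r3, pow_mul]
    norm_num

lemma card_top_hom_free (g : ℕ) :
    Nat.card (FreeGroup (Fin g) →* (⊤ : Subgroup P3)) = 6^g := by
  rw [Nat.card_congr (postcompEquiv (A := FreeGroup (Fin g)) Subgroup.topEquiv),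
    card_freeHom g P3]
  have : Nat.card P3 = 6 := by rw [Nat.card_eq_fintype_card]; decide
  rw [this]

lemma HFree (g k : ℕ) :
    Nat.card ((FreeGroup (Fin g) × Multiplicative (Fin k → ℤ)) →* P3)
      = 6^g + (3 * (2^k - 1)) * 2^g + (3^k - 1) * 3^g := by
  refine master_count (FreeGroup (Fin g)) k (6^g) (2^g) (3^g)
    (card_top_hom_free g) ?_ ?_
  · intro t ht
    rw [card_freeHom g _, card_zpowers_sign t ht]
  · rw [card_freeHom g _, card_zpowers_r3]

lemma card_hom_congr {G₁ G₂ : Type*} [Group G₁] [Group G₂] (e : G₁ ≃* G₂) :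
    Nat.card (G₁ →* P3) = Nat.card (G₂ →* P3) :=
  Nat.card_congr (precompEquiv e)
end Masters
section Rank
open Subgroup Cardinal Multiplicative

lemma grpRank_le_of_gen {G : Type*} [Group G] (S : Set G) (h : Subgroup.closure S = ⊤) :
    grpRank G ≤ Cardinal.mk S :=
  ciInf_le' _ (⟨S, h⟩ : {S : Set G // Subgroup.closure S = ⊤})

lemma grpRank_le_congr {G H : Type} [Group G] [Group H] (e : G ≃* H) :
    grpRank H ≤ grpRank G := by
  haveI : Nonempty {S : Set G // Subgroup.closure S = ⊤} := ⟨⟨Set.univ, Subgroup.closure_univ⟩⟩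
  apply le_ciInf
  rintro ⟨S, hS⟩
  have h1 : Subgroup.closure (⇑e.toMonoidHom '' S) = ⊤ := by
    rw [← MonoidHom.map_closure e.toMonoidHom, hS]
    exact Subgroup.map_top_of_surjective _ e.surjective
  calc grpRank H ≤ Cardinal.mk (⇑e.toMonoidHom '' S) := grpRank_le_of_gen _ h1
    _ = Cardinal.mk S := Cardinal.mk_image_eq e.injective

lemma grpRank_congr {G H : Type} [Group G] [Group H] (e : G ≃* H) :
    grpRank G = grpRank H :=
  le_antisymm (grpRank_le_congr e.symm) (grpRank_le_congr e)

lemma grpRank_eq_of {G : Type} [Group G] {ι : Type} [Fintype ι] (gen : ι → G)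
    (hgen : Subgroup.closure (Set.range gen) = ⊤)
    (V : Type) [AddCommGroup V] [Module (ZMod 2) V]
    (hV : Module.rank (ZMod 2) V = Fintype.card ι)
    (π : G →* Multiplicative V) (hπ : Function.Surjective π) :
    grpRank G = Fintype.card ι := by
  apply le_antisymm
  · calc grpRank G ≤ Cardinal.mk (Set.range gen) := grpRank_le_of_gen _ hgen
      _ ≤ Cardinal.mk ι := Cardinal.mk_range_le
      _ = Fintype.card ι := Cardinal.mk_fintype ι
  · haveI : Nonempty {S : Set G // Subgroup.closure S = ⊤} := ⟨⟨Set.univ, Subgroup.closure_univ⟩⟩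
    apply le_ciInf
    rintro ⟨S, hS⟩
    have hclosure : Subgroup.closure (⇑π '' S) = ⊤ := by
      rw [← MonoidHom.map_closure, hS]
      exact Subgroup.map_top_of_surjective _ hπ
    set T : Set V := Multiplicative.toAdd '' (⇑π '' S) with hT
    have hspan : Submodule.span (ZMod 2) T = ⊤ := by
      rw [Submodule.eq_top_iff']
      intro v
      have hv : Multiplicative.ofAdd v ∈ Subgroup.closure (⇑π '' S) := by
        rw [hclosure]; trivial
      refine Subgroup.closure_induction
        (p := fun x _ => Multiplicative.toAdd x ∈ Submodule.span (ZMod 2) T) ?_ ?_ ?_ ?_ hv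
      · intro x hx
        exact Submodule.subset_span ⟨x, hx, rfl⟩
      · exact Submodule.zero_mem _
      · intro x y _ _ hx hy
        exact Submodule.add_mem _ hx hy
      · intro x _ hx
        exact Submodule.neg_mem _ hx
    have h2 : Module.rank (ZMod 2) V ≤ Cardinal.mk T := by
      have h3 := rank_span_le (R := ZMod 2) (M := V) T
      rwa [hspan, rank_top] at h3
    calc (Fintype.card ι : Cardinal) = Module.rank (ZMod 2) V := hV.symm
      _ ≤ Cardinal.mk T := h2
      _ ≤ Cardinal.mk (⇑π '' S) := Cardinal.mk_image_le
      _ ≤ Cardinal.mk S := Cardinal.mk_image_le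

lemma zmod2_cases : ∀ a : ZMod 2, a = 0 ∨ a = 1 := by decide

/-- surjectivity criterion for maps onto `Multiplicative (η → ZMod 2)`. -/
lemma surj_of_hits_singles {G : Type*} [Group G] {η : Type} [Fintype η] [DecidableEq η]
    (π : G →* Multiplicative (η → ZMod 2))
    (h : ∀ x : η, Multiplicative.ofAdd (Pi.single x (1 : ZMod 2)) ∈ π.range) :
    Function.Surjective π := by
  rw [← MonoidHom.range_eq_top]
  rw [eq_top_iff]
  intro v _
  have h1 : v = Multiplicative.ofAdd (∑ x, Pi.single x ((Multiplicative.toAdd v) x)) := by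
    rw [Finset.univ_sum_single]
    rfl
  rw [h1, ofAdd_sum]
  apply Subgroup.prod_mem
  intro x _
  rcases zmod2_cases (Multiplicative.toAdd v x) with h2 | h2 <;> rw [h2]
  · convert Subgroup.one_mem π.range
    simp
  · exact h x

lemma closure_singles_int (k : ℕ) :
    Subgroup.closure (Set.range
      (fun i : Fin k => Multiplicative.ofAdd (Pi.single i (1:ℤ)))) = ⊤ := by
  rw [eq_top_iff]
  intro v _
  have h1 := hom_eq_zHom (MonoidHom.id (Multiplicative (Fin k → ℤ))) v
  simp only [MonoidHom.id_apply] at h1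
  rw [h1]
  apply Subgroup.noncommProd_mem
  intro i _
  exact Subgroup.zpow_mem _ (Subgroup.subset_closure (Set.mem_range_self i)) _
end Rank
section RankValues
open Subgroup Multiplicative

lemma surfaceHomEquiv_symm_apply {g : ℕ} {H : Type*} [Group H]
    (v : Fin g × Bool → H) (hv : relWord g v = 1) (x : Fin g × Bool) :
    ((surfaceHomEquiv g H).symm ⟨v, hv⟩) (PresentedGroup.of x) = v x :=
  congrFun (congrArg Subtype.val ((surfaceHomEquiv g H).right_inv ⟨v, hv⟩)) x

-- generators of the product groups
def surfGen (g k : ℕ) : (Fin g × Bool) ⊕ Fin k →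
    (SurfaceGroup g × Multiplicative (Fin k → ℤ)) :=
  Sum.elim (fun x => (PresentedGroup.of x, 1)) (fun i => (1, ofAdd (Pi.single i 1)))

def freeGen (g k : ℕ) : Fin g ⊕ Fin k →
    (FreeGroup (Fin g) × Multiplicative (Fin k → ℤ)) :=
  Sum.elim (fun x => (FreeGroup.of x, 1)) (fun i => (1, ofAdd (Pi.single i 1)))

private lemma prod_mem_closure {G H : Type*} [Group G] [Group H]
    (K : Subgroup (G × H)) (SG : Set G) (SH : Set H)
    (hG : Subgroup.closure SG = ⊤) (hH : Subgroup.closure SH = ⊤)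
    (hSG : ∀ x ∈ SG, (x, (1:H)) ∈ K) (hSH : ∀ y ∈ SH, ((1:G), y) ∈ K) :
    ∀ p : G × H, p ∈ K := by
  have ha : ∀ a : G, (a, (1:H)) ∈ K := by
    intro a
    have h1 : Subgroup.closure SG ≤ Subgroup.comap (MonoidHom.inl G H) K := by
      rw [Subgroup.closure_le]
      intro x hx
      exact Subgroup.mem_comap.2 (hSG x hx)
    have h2 : a ∈ Subgroup.comap (MonoidHom.inl G H) K := h1 (by rw [hG]; trivial)
    exact h2
  have hb : ∀ b : H, ((1:G), b) ∈ K := by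
    intro b
    have h1 : Subgroup.closure SH ≤ Subgroup.comap (MonoidHom.inr G H) K := by
      rw [Subgroup.closure_le]
      intro y hy
      exact Subgroup.mem_comap.2 (hSH y hy)
    have h2 : b ∈ Subgroup.comap (MonoidHom.inr G H) K := h1 (by rw [hH]; trivial)
    exact h2
  intro p
  have : p = (p.1, 1) * (1, p.2) := by
    apply Prod.ext <;> simp
  rw [this]
  exact mul_mem (ha p.1) (hb p.2)

lemma closure_surfGen (g k : ℕ) : Subgroup.closure (Set.range (surfGen g k)) = ⊤ := by
  rw [eq_top_iff]
  intro p _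
  refine prod_mem_closure _ (Set.range PresentedGroup.of) (Set.range
    (fun i : Fin k => ofAdd (Pi.single i (1:ℤ)))) (PresentedGroup.closure_range_of _)
    (closure_singles_int k) ?_ ?_ p
  · rintro x ⟨y, rfl⟩
    exact Subgroup.subset_closure ⟨Sum.inl y, rfl⟩
  · rintro x ⟨i, rfl⟩
    exact Subgroup.subset_closure ⟨Sum.inr i, rfl⟩

lemma closure_freeGen (g k : ℕ) : Subgroup.closure (Set.range (freeGen g k)) = ⊤ := by
  rw [eq_top_iff]
  intro p _
  refine prod_mem_closure _ (Set.range FreeGroup.of) (Set.range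
    (fun i : Fin k => ofAdd (Pi.single i (1:ℤ)))) (FreeGroup.closure_range_of _)
    (closure_singles_int k) ?_ ?_ p
  · rintro x ⟨y, rfl⟩
    exact Subgroup.subset_closure ⟨Sum.inl y, rfl⟩
  · rintro x ⟨i, rfl⟩
    exact Subgroup.subset_closure ⟨Sum.inr i, rfl⟩

-- the mod-2 abelianization targets
noncomputable def surfPi (g k : ℕ) :
    (SurfaceGroup g × Multiplicative (Fin k → ℤ)) →*
      Multiplicative (((Fin g × Bool) ⊕ Fin k) → ZMod 2) :=
  MonoidHom.noncommCoprod
    ((surfaceHomEquiv g _).symm ⟨fun x => ofAdd (Pi.single (Sum.inl x) 1),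
      relWord_eq_one g _⟩)
    (zHom (fun i => ofAdd (Pi.single (Sum.inr i) 1)) (fun i j => Commute.all _ _))
    (fun m n => Commute.all _ _)

lemma surfPi_surj (g k : ℕ) : Function.Surjective (surfPi g k) := by
  apply surj_of_hits_singles
  intro s
  match s with
  | Sum.inl x =>
      refine ⟨(PresentedGroup.of x, 1), ?_⟩
      rw [surfPi, MonoidHom.noncommCoprod_apply, map_one, mul_one,
        surfaceHomEquiv_symm_apply]
  | Sum.inr i =>
      refine ⟨(1, ofAdd (Pi.single i 1)), ?_⟩
      rw [surfPi, MonoidHom.noncommCoprod_apply, map_one, one_mul, zHom_single]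

noncomputable def freePi (g k : ℕ) :
    (FreeGroup (Fin g) × Multiplicative (Fin k → ℤ)) →*
      Multiplicative ((Fin g ⊕ Fin k) → ZMod 2) :=
  MonoidHom.noncommCoprod
    (FreeGroup.lift (fun x => ofAdd (Pi.single (Sum.inl x) 1)))
    (zHom (fun i => ofAdd (Pi.single (Sum.inr i) 1)) (fun i j => Commute.all _ _))
    (fun m n => Commute.all _ _)

lemma freePi_surj (g k : ℕ) : Function.Surjective (freePi g k) := by
  apply surj_of_hits_singles
  intro s
  match s with
  | Sum.inl x =>
      refine ⟨(FreeGroup.of x, 1), ?_⟩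
      rw [freePi, MonoidHom.noncommCoprod_apply, map_one, mul_one, FreeGroup.lift_apply_of]
  | Sum.inr i =>
      refine ⟨(1, ofAdd (Pi.single i 1)), ?_⟩
      rw [freePi, MonoidHom.noncommCoprod_apply, map_one, one_mul, zHom_single]

lemma grpRank_surf (g k : ℕ) :
    grpRank (SurfaceGroup g × Multiplicative (Fin k → ℤ)) = ((2 * g + k : ℕ) : Cardinal) := by
  have h := grpRank_eq_of (surfGen g k) (closure_surfGen g k)
    (((Fin g × Bool) ⊕ Fin k) → ZMod 2) (by rw [rank_fun']) (surfPi g k) (surfPi_surj g k)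
  rw [h]
  norm_num [Fintype.card_sum, Fintype.card_prod]
  ring

lemma grpRank_free (g k : ℕ) :
    grpRank (FreeGroup (Fin g) × Multiplicative (Fin k → ℤ)) = ((g + k : ℕ) : Cardinal) := by
  have h := grpRank_eq_of (freeGen g k) (closure_freeGen g k)
    ((Fin g ⊕ Fin k) → ZMod 2) (by rw [rank_fun']) (freePi g k) (freePi_surj g k)
  rw [h]
  norm_num [Fintype.card_sum]
end RankValues
section Arith
def Uz (g : ℕ) : ℤ := 36^g - 9^g - 9*4^g
def Vz (m : ℕ) : ℤ := 3*6^m - 9*2^m - 3*3^m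
def Cz (r : ℕ) : ℤ := 9*2^r + 3*3^r

private lemma pow_sq (x : ℤ) (n : ℕ) : (x^2)^n = (x^n)^2 := by
  rw [← pow_mul, ← pow_mul, Nat.mul_comm]

lemma Vz_step (m : ℕ) (hm : 1 ≤ m) : Vz m < Vz (m+1) := by
  have h1 : (2:ℤ)^m ≤ 3^m := pow_le_pow_left₀ (by norm_num) (by norm_num) m
  have h2 : (3:ℤ)^m < 6^m := pow_lt_pow_left₀ (by norm_num) (by norm_num) (by omega)
  simp only [Vz, pow_succ]
  nlinarith

lemma Uz_step (g : ℕ) (hg : 1 ≤ g) : Uz g < Uz (g+1) := by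
  have h1 : (4:ℤ)^g ≤ 9^g := pow_le_pow_left₀ (by norm_num) (by norm_num) g
  have h2 : (9:ℤ)^g < 36^g := pow_lt_pow_left₀ (by norm_num) (by norm_num) (by omega)
  simp only [Uz, pow_succ]
  nlinarith

lemma Vz_mono (m m' : ℕ) (h1 : 1 ≤ m) (h : m < m') : Vz m < Vz m' := by
  induction m' with
  | zero => omega
  | succ n ih =>
    rcases Nat.lt_succ_iff_lt_or_eq.mp h with h' | h'
    · exact (ih h').trans (Vz_step n (by omega))
    · subst h'; exact Vz_step m h1

lemma Uz_mono (g g' : ℕ) (h1 : 1 ≤ g) (h : g < g') : Uz g < Uz g' := by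
  induction g' with
  | zero => omega
  | succ n ih =>
    rcases Nat.lt_succ_iff_lt_or_eq.mp h with h' | h'
    · exact (ih h').trans (Uz_step n (by omega))
    · subst h'; exact Uz_step g h1

lemma Vz_mono_le (m m' : ℕ) (h1 : 1 ≤ m) (h : m ≤ m') : Vz m ≤ Vz m' := by
  rcases Nat.lt_or_ge m m' with h' | h'
  · exact (Vz_mono m m' h1 h').le
  · have : m = m' := by omega
    subst this; rfl

lemma sandwich1 (g : ℕ) (hg : 2 ≤ g) : Vz (2*g - 1) < Uz g := by
  obtain ⟨j, rfl⟩ : ∃ j, g = j + 2 := ⟨g - 2, by omega⟩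
  have e1 : 2 * (j+2) - 1 = 2*j + 3 := by omega
  rw [e1, Uz, Vz]
  have e36 : (36:ℤ)^(j+2) = 1296 * (6^j)^2 := by
    rw [show (36:ℤ) = 6^2 by norm_num, pow_sq, pow_add]; ring
  have e9 : (9:ℤ)^(j+2) = 81 * (3^j)^2 := by
    rw [show (9:ℤ) = 3^2 by norm_num, pow_sq, pow_add]; ring
  have e4 : (4:ℤ)^(j+2) = 16 * (2^j)^2 := by
    rw [show (4:ℤ) = 2^2 by norm_num, pow_sq, pow_add]; ring
  have e6 : (6:ℤ)^(2*j+3) = 216 * (6^j)^2 := by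
    rw [pow_add, pow_mul, pow_sq]; ring
  have e2 : (2:ℤ)^(2*j+3) = 8 * (2^j)^2 := by
    rw [pow_add, pow_mul, pow_sq]; ring
  have e3 : (3:ℤ)^(2*j+3) = 27 * (3^j)^2 := by
    rw [pow_add, pow_mul, pow_sq]; ring
  rw [e36, e9, e4, e6, e2, e3]
  have h1 : (2:ℤ)^j ≤ 6^j := pow_le_pow_left₀ (by norm_num) (by norm_num) j
  have h2 : (0:ℤ) < 2^j := pow_pos (by norm_num) j
  nlinarith

lemma sandwich2 (g : ℕ) (hg : 1 ≤ g) : Uz g < Vz (2*g) := by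
  rw [Uz, Vz]
  have e6 : (6:ℤ)^(2*g) = (6^g)^2 := by rw [pow_mul, pow_sq]
  have e2 : (2:ℤ)^(2*g) = (2^g)^2 := by rw [pow_mul, pow_sq]
  have e3 : (3:ℤ)^(2*g) = (3^g)^2 := by rw [pow_mul, pow_sq]
  have e36 : (36:ℤ)^g = (6^g)^2 := by rw [show (36:ℤ) = 6^2 by norm_num, pow_sq]
  have e9 : (9:ℤ)^g = (3^g)^2 := by rw [show (9:ℤ) = 3^2 by norm_num, pow_sq]
  have e4 : (4:ℤ)^g = (2^g)^2 := by rw [show (4:ℤ) = 2^2 by norm_num, pow_sq]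
  rw [e6, e2, e3, e36, e9, e4]
  have h1 : (3:ℤ)^g < 6^g := pow_lt_pow_left₀ (by norm_num) (by norm_num) (by omega)
  have h2 : (0:ℤ) < 3^g := pow_pos (by norm_num) g
  have h3 : (0:ℤ) < 2^g := pow_pos (by norm_num) g
  nlinarith

lemma U_ne_V (g1 g2 : ℕ) (hg1 : 2 ≤ g1) (hg2 : 2 ≤ g2) : Uz g1 ≠ Vz g2 := by
  intro h
  rcases Nat.lt_or_ge g2 (2*g1) with h' | h'
  · have h2 : Vz g2 ≤ Vz (2*g1 - 1) := Vz_mono_le g2 (2*g1-1) (by omega) (by omega)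
    have h3 := sandwich1 g1 hg1
    omega
  · have h2 : Vz (2*g1) ≤ Vz g2 := Vz_mono_le (2*g1) g2 (by omega) h'
    have h3 := sandwich2 g1 (by omega)
    omega

lemma U_inj (g1 g2 : ℕ) (hg1 : 1 ≤ g1) (hg2 : 1 ≤ g2) (h : Uz g1 = Uz g2) : g1 = g2 := by
  rcases Nat.lt_trichotomy g1 g2 with h' | h' | h'
  · exact absurd h (Uz_mono g1 g2 hg1 h').ne
  · exact h'
  · exact absurd h.symm (Uz_mono g2 g1 hg2 h').ne

lemma V_inj (g1 g2 : ℕ) (hg1 : 1 ≤ g1) (hg2 : 1 ≤ g2) (h : Vz g1 = Vz g2) : g1 = g2 := by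
  rcases Nat.lt_trichotomy g1 g2 with h' | h' | h'
  · exact absurd h (Vz_mono g1 g2 hg1 h').ne
  · exact h'
  · exact absurd h.symm (Vz_mono g2 g1 hg2 h').ne

lemma three_countS (g k : ℕ) :
    ((aa g + (3*(2^k - 1))*4^g + (3^k - 1)*9^g : ℕ) : ℤ) * 3 = Uz g + Cz (2*g+k) := by
  have h1 : ((aa g : ℕ) : ℤ) * 3 = 36^g + 2*9^g := by
    have h := (aabb_closed g).1
    have h' : ((3 * aa g : ℕ) : ℤ) = ((36^g + 2*9^g : ℕ) : ℤ) := by rw [h]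
    push_cast at h'
    linarith
  have hs2 : (1:ℕ) ≤ 2^k := Nat.one_le_two_pow
  have hs3 : (1:ℕ) ≤ 3^k := Nat.one_le_pow _ _ (by norm_num)
  have e2 : (2:ℤ)^(2*g+k) = 4^g * 2^k := by
    rw [pow_add, pow_mul]; norm_num
  have e3 : (3:ℤ)^(2*g+k) = 9^g * 3^k := by
    rw [pow_add, pow_mul]; norm_num
  rw [Uz, Cz, e2, e3]
  push_cast [Nat.cast_sub hs2, Nat.cast_sub hs3]
  linarith

lemma three_countF (g k : ℕ) :
    ((6^g + (3*(2^k - 1))*2^g + (3^k - 1)*3^g : ℕ) : ℤ) * 3 = Vz g + Cz (g+k) := by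
  have hs2 : (1:ℕ) ≤ 2^k := Nat.one_le_two_pow
  have hs3 : (1:ℕ) ≤ 3^k := Nat.one_le_pow _ _ (by norm_num)
  have e2 : (2:ℤ)^(g+k) = 2^g * 2^k := by rw [pow_add]
  have e3 : (3:ℤ)^(g+k) = 3^g * 3^k := by rw [pow_add]
  rw [Vz, Cz, e2, e3]
  push_cast [Nat.cast_sub hs2, Nat.cast_sub hs3]
  ring
end Arith
theorem stmt10 (g₁ g₂ k₁ k₂ : ℕ) (hg₁ : 2 ≤ g₁) (hg₂ : 2 ≤ g₂)
    (hk₁ : 1 ≤ k₁) (hk₂ : 1 ≤ k₂) :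
    IsEmpty ((SurfaceGroup g₁ × Multiplicative (Fin k₁ → ℤ)) ≃*
        (FreeGroup (Fin g₂) × Multiplicative (Fin k₂ → ℤ))) ∧
    (Nonempty ((SurfaceGroup g₁ × Multiplicative (Fin k₁ → ℤ)) ≃*
        (SurfaceGroup g₂ × Multiplicative (Fin k₂ → ℤ))) ↔ (g₁ = g₂ ∧ k₁ = k₂)) ∧
    (Nonempty ((FreeGroup (Fin g₁) × Multiplicative (Fin k₁ → ℤ)) ≃*
        (FreeGroup (Fin g₂) × Multiplicative (Fin k₂ → ℤ))) ↔ (g₁ = g₂ ∧ k₁ = k₂)) ∧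
    (∀ g k : ℕ,
      grpRank (SurfaceGroup g × Multiplicative (Fin k → ℤ)) = ((2 * g + k : ℕ) : Cardinal) ∧
      grpRank (FreeGroup (Fin g) × Multiplicative (Fin k → ℤ)) = ((g + k : ℕ) : Cardinal)) := by
  refine ⟨?_, ?_, ?_, fun g k => ⟨grpRank_surf g k, grpRank_free g k⟩⟩
  · constructor
    intro e
    have hr : ((2*g₁+k₁ : ℕ) : Cardinal) = ((g₂+k₂ : ℕ) : Cardinal) := by
      rw [← grpRank_surf g₁ k₁, ← grpRank_free g₂ k₂]
      exact grpRank_congr e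
    have hrn : 2*g₁+k₁ = g₂+k₂ := Nat.cast_inj.mp hr
    have hc := card_hom_congr e
    rw [HSigma, HFree] at hc
    have hcz : ((aa g₁ + (3*(2^k₁ - 1))*4^g₁ + (3^k₁ - 1)*9^g₁ : ℕ) : ℤ)
        = ((6^g₂ + (3*(2^k₂ - 1))*2^g₂ + (3^k₂ - 1)*3^g₂ : ℕ) : ℤ) := by
      exact_mod_cast congrArg (fun n : ℕ => (n : ℤ)) hc
    have h3 := three_countS g₁ k₁
    have h4 := three_countF g₂ k₂
    rw [hrn] at h3
    have hUV : Uz g₁ = Vz g₂ := by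
      rw [hcz] at h3
      linarith
    exact U_ne_V g₁ g₂ hg₁ hg₂ hUV
  · constructor
    · rintro ⟨e⟩
      have hr : ((2*g₁+k₁ : ℕ) : Cardinal) = ((2*g₂+k₂ : ℕ) : Cardinal) := by
        rw [← grpRank_surf g₁ k₁, ← grpRank_surf g₂ k₂]
        exact grpRank_congr e
      have hrn : 2*g₁+k₁ = 2*g₂+k₂ := Nat.cast_inj.mp hr
      have hc := card_hom_congr e
      rw [HSigma, HSigma] at hc
      have hcz : ((aa g₁ + (3*(2^k₁ - 1))*4^g₁ + (3^k₁ - 1)*9^g₁ : ℕ) : ℤ)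
          = ((aa g₂ + (3*(2^k₂ - 1))*4^g₂ + (3^k₂ - 1)*9^g₂ : ℕ) : ℤ) := by
        exact_mod_cast congrArg (fun n : ℕ => (n : ℤ)) hc
      have h3 := three_countS g₁ k₁
      have h4 := three_countS g₂ k₂
      rw [hrn] at h3
      have hUU : Uz g₁ = Uz g₂ := by
        rw [hcz] at h3
        linarith
      have hg : g₁ = g₂ := U_inj g₁ g₂ (by omega) (by omega) hUU
      exact ⟨hg, by omega⟩
    · rintro ⟨rfl, rfl⟩
      exact ⟨MulEquiv.refl _⟩
  · constructor
    · rintro ⟨e⟩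
      have hr : ((g₁+k₁ : ℕ) : Cardinal) = ((g₂+k₂ : ℕ) : Cardinal) := by
        rw [← grpRank_free g₁ k₁, ← grpRank_free g₂ k₂]
        exact grpRank_congr e
      have hrn : g₁+k₁ = g₂+k₂ := Nat.cast_inj.mp hr
      have hc := card_hom_congr e
      rw [HFree, HFree] at hc
      have hcz : ((6^g₁ + (3*(2^k₁ - 1))*2^g₁ + (3^k₁ - 1)*3^g₁ : ℕ) : ℤ)
          = ((6^g₂ + (3*(2^k₂ - 1))*2^g₂ + (3^k₂ - 1)*3^g₂ : ℕ) : ℤ) := by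
        exact_mod_cast congrArg (fun n : ℕ => (n : ℤ)) hc
      have h3 := three_countF g₁ k₁
      have h4 := three_countF g₂ k₂
      rw [hrn] at h3
      have hVV : Vz g₁ = Vz g₂ := by
        rw [hcz] at h3
        linarith
      have hg : g₁ = g₂ := V_inj g₁ g₂ (by omega) (by omega) hVV
      exact ⟨hg, by omega⟩
    · rintro ⟨rfl, rfl⟩
      exact ⟨MulEquiv.refl _⟩
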